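/- Let v be an even, nondecreasing, submultiplicative weight with Σ_{l∈ℤ} v(l)^{-2} < ∞, let h > 0, n ∈ ℕ, p = hn, and let f be continuous with amalgam norm ‖f‖_W = (Σ_{l∈ℤ} sup_{x∈[0,1]} |f(x+l)|² v(l)²)^{1/2} < ∞. Then ( h Σ_{j∈[n]} |Σ_{l≠0} f(hj + pl)|² )^{1/2} ≤ v(1) · Φ_v(p) · (1+h)^{1/2} · ‖f‖_W, where [n] = {j ∈ ℤ : −n/2 < j ≤ n/2} and Φ_v(p) = (2 Σ_{m=0}^∞ v(pm + p/2)^{-2})^{1/2}. -/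

import Mathlib

/-- The index set [n] = {j ∈ ℤ : −n/2 < j ≤ n/2}. -/
noncomputable def Idx (n : ℕ) : Finset ℤ :=
  (Finset.Icc (-(n : ℤ)) (n : ℤ)).filter fun j => -(n : ℤ) < 2*j ∧ 2*j ≤ (n : ℤ)

/-- Local sup of |f| on the unit interval [l, l+1]. -/
noncomputable def locSup (f : ℝ → ℂ) (l : ℤ) : ℝ :=
  ⨆ x ∈ Set.Icc (0:ℝ) 1, ‖f (x + (l : ℝ))‖

private lemma locSup_bdd (f : ℝ → ℂ) (hf : Continuous f) (l : ℤ) :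
    BddAbove (Set.range fun x : ℝ => ⨆ _ : x ∈ Set.Icc (0:ℝ) 1, ‖f (x + (l:ℝ))‖) := by
  obtain ⟨C, hC⟩ := (isCompact_Icc (a := (0:ℝ)) (b := 1)).exists_bound_of_continuousOn
    (f := fun x => f (x + (l:ℝ))) ((hf.comp (by continuity)).continuousOn)
  refine ⟨max C 0, ?_⟩
  rintro y ⟨x, rfl⟩
  simp only
  by_cases hx : x ∈ Set.Icc (0:ℝ) 1
  · rw [ciSup_pos hx]
    exact le_max_of_le_left (by simpa using hC x hx)
  · haveI : IsEmpty (x ∈ Set.Icc (0:ℝ) 1) := ⟨hx⟩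
    rw [Real.iSup_of_isEmpty]
    exact le_max_right _ _

private lemma abs_le_locSup (f : ℝ → ℂ) (hf : Continuous f) (l : ℤ) {x : ℝ}
    (hx : x ∈ Set.Icc (0:ℝ) 1) : ‖f (x + (l:ℝ))‖ ≤ locSup f l := by
  have := le_ciSup (locSup_bdd f hf l) x
  rwa [ciSup_pos hx] at this

private lemma locSup_nonneg' (f : ℝ → ℂ) (hf : Continuous f) (l : ℤ) : 0 ≤ locSup f l :=
  le_trans (norm_nonneg _) (abs_le_locSup f hf l ⟨le_refl 0, zero_le_one⟩)

private lemma cs_tsum {ι : Type*} (a b : ι → ℝ) (ha0 : ∀ i, 0 ≤ a i) (hb0 : ∀ i, 0 ≤ b i)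
    (hA : Summable fun i => a i ^ 2) (hB : Summable fun i => b i ^ 2) :
    Summable (fun i => a i * b i) ∧
      (∑' i, a i * b i) ^ 2 ≤ (∑' i, a i ^ 2) * (∑' i, b i ^ 2) := by
  have hsum : Summable fun i => a i * b i := by
    refine Summable.of_nonneg_of_le (fun i => mul_nonneg (ha0 i) (hb0 i))
      (fun i => ?_) ((hA.add hB).mul_left (1/2 : ℝ))
    nlinarith [sq_nonneg (a i - b i)]
  refine ⟨hsum, ?_⟩
  have hAnn : 0 ≤ ∑' i, a i ^ 2 := tsum_nonneg fun i => sq_nonneg _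
  have hBnn : 0 ≤ ∑' i, b i ^ 2 := tsum_nonneg fun i => sq_nonneg _
  have key : ∑' i, a i * b i ≤ Real.sqrt ((∑' i, a i ^ 2) * (∑' i, b i ^ 2)) := by
    refine Summable.tsum_le_of_sum_le hsum fun s => ?_
    have h1 : (∑ i ∈ s, a i * b i) ^ 2 ≤ (∑ i ∈ s, a i ^ 2) * (∑ i ∈ s, b i ^ 2) :=
      Finset.sum_mul_sq_le_sq_mul_sq s a b
    have h2 : (∑ i ∈ s, a i ^ 2) * (∑ i ∈ s, b i ^ 2) ≤ (∑' i, a i ^ 2) * (∑' i, b i ^ 2) :=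
      mul_le_mul (Summable.sum_le_tsum s (fun i _ => sq_nonneg _) hA)
        (Summable.sum_le_tsum s (fun i _ => sq_nonneg _) hB)
        (Finset.sum_nonneg fun i _ => sq_nonneg _) hAnn
    have h3 : 0 ≤ ∑ i ∈ s, a i * b i :=
      Finset.sum_nonneg fun i _ => mul_nonneg (ha0 i) (hb0 i)
    calc ∑ i ∈ s, a i * b i
        ≤ Real.sqrt ((∑ i ∈ s, a i ^ 2) * (∑ i ∈ s, b i ^ 2)) := by
          rw [← Real.sqrt_sq h3]; exact Real.sqrt_le_sqrt h1
      _ ≤ _ := Real.sqrt_le_sqrt h2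
  calc (∑' i, a i * b i) ^ 2
      ≤ Real.sqrt ((∑' i, a i ^ 2) * (∑' i, b i ^ 2)) ^ 2 :=
        pow_le_pow_left₀ (tsum_nonneg fun i => mul_nonneg (ha0 i) (hb0 i)) key 2
    _ = _ := Real.sq_sqrt (mul_nonneg hAnn hBnn)

private lemma counting (G : ℤ → ℝ) (hGnn : ∀ l, 0 ≤ G l) (hG : Summable G)
    (c d : ℝ) (hc : 0 < c) :
    Summable (fun k : ℤ => G ⌊c * k + d⌋) ∧
      ∑' k : ℤ, G ⌊c * k + d⌋ ≤ ((⌊1/c⌋.toNat : ℝ) + 1) * ∑' l : ℤ, G l := by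
  set N : ℕ := ⌊1/c⌋.toNat + 1 with hN
  set g : ℤ × Fin N → ℝ := fun x => G x.1 with hgdef
  have hgnn : ∀ x, 0 ≤ g x := fun x => hGnn x.1
  have hgsum : Summable g := by
    refine (summable_prod_of_nonneg hgnn).mpr ⟨fun l => Summable.of_finite, ?_⟩
    refine Summable.congr (hG.mul_left (N : ℝ)) fun l => ?_
    simp [hgdef, tsum_fintype, Finset.sum_const, nsmul_eq_mul]
  have hgtsum : ∑' x, g x = (N : ℝ) * ∑' l, G l := by
    rw [Summable.tsum_prod' hgsum fun l => Summable.of_finite]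
    rw [← tsum_mul_left]
    congr 1; funext l
    simp [hgdef, tsum_fintype, Finset.sum_const, nsmul_eq_mul]
  have hkey : ∀ k : ℤ, ⌈((⌊c * k + d⌋ : ℝ) - d)/c⌉ ≤ k ∧
      (k - ⌈((⌊c * k + d⌋ : ℝ) - d)/c⌉).toNat < N := by
    intro k
    have hfl : ((⌊c * k + d⌋ : ℝ)) ≤ c * k + d := Int.floor_le _
    have hfl2 : c * k + d < (⌊c * k + d⌋ : ℝ) + 1 := Int.lt_floor_add_one _
    have h1 : ⌈((⌊c * k + d⌋ : ℝ) - d)/c⌉ ≤ k := by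
      refine Int.ceil_le.mpr ?_
      rw [div_le_iff₀ hc]
      linarith [mul_comm c (k:ℝ)]
    refine ⟨h1, ?_⟩
    have h2 : ((k - ⌈((⌊c * k + d⌋ : ℝ) - d)/c⌉ : ℤ) : ℝ) < 1/c := by
      push_cast
      have h3 : (k : ℝ) < ((⌊c * k + d⌋ : ℝ) + 1 - d)/c := by
        rw [lt_div_iff₀ hc]; linarith [mul_comm c (k:ℝ)]
      have h4 : ((⌊c * k + d⌋ : ℝ) - d)/c ≤ (⌈((⌊c * k + d⌋ : ℝ) - d)/c⌉ : ℝ) := Int.le_ceil _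
      have : ((⌊c * k + d⌋ : ℝ) + 1 - d)/c - ((⌊c * k + d⌋ : ℝ) - d)/c = 1/c := by
        field_simp
        ring
      linarith
    have h5 : k - ⌈((⌊c * k + d⌋ : ℝ) - d)/c⌉ ≤ ⌊1/c⌋ := Int.le_floor.mpr h2.le
    have h6 : (k - ⌈((⌊c * k + d⌋ : ℝ) - d)/c⌉).toNat ≤ ⌊1/c⌋.toNat := Int.toNat_le_toNat h5
    omega
  set ψ : ℤ → ℤ × Fin N := fun k => (⌊c * k + d⌋, ⟨_, (hkey k).2⟩) with hψdef
  have hψ : Function.Injective ψ := by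
    intro k k' hkk
    have h1 : ⌊c * k + d⌋ = ⌊c * k' + d⌋ := congrArg Prod.fst hkk
    have h2 : (k - ⌈((⌊c * k + d⌋ : ℝ) - d)/c⌉).toNat
        = (k' - ⌈((⌊c * k' + d⌋ : ℝ) - d)/c⌉).toNat := by
      have := congrArg Prod.snd hkk
      simpa [hψdef] using this
    have h3 := (hkey k).1
    have h4 := (hkey k').1
    rw [h1] at h2 h3
    omega
  have hcomp : (fun k : ℤ => G ⌊c * k + d⌋) = g ∘ ψ := rfl
  have hsum : Summable fun k : ℤ => G ⌊c * k + d⌋ := by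
    rw [hcomp]; exact hgsum.comp_injective hψ
  refine ⟨hsum, ?_⟩
  calc ∑' k : ℤ, G ⌊c * k + d⌋ ≤ ∑' x, g x :=
        Summable.tsum_le_tsum_of_inj ψ hψ (fun x _ => hgnn x) (fun k => le_rfl) hsum hgsum
    _ = _ := by rw [hgtsum]; push_cast [hN]; ring

/-- Sampled deviation from the periodization: for an even, nondecreasing,
submultiplicative weight v with Σ_l v(l)^{-2} < ∞, h > 0, p = hn and a
continuous f with finite amalgam norm,
( h Σ_{j∈[n]} |Σ_{l≠0} f(hj + pl)|² )^{1/2} ≤ v(1)·Φ_v(p)·(1+h)^{1/2}·‖f‖_W. -/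
theorem sampled_periodization_bound (v : ℝ → ℝ) (f : ℝ → ℂ)
    (hpos : ∀ x, 0 < v x)
    (heven : ∀ x, v (-x) = v x)
    (hmono : ∀ x y, |x| ≤ |y| → v x ≤ v y)
    (hsub : ∀ x y, v (x + y) ≤ v x * v y)
    (hvsum : Summable fun l : ℤ => (v (l : ℝ) ^ 2)⁻¹)
    (hf : Continuous f)
    (hW : Summable fun l : ℤ => locSup f l ^ 2 * v (l : ℝ) ^ 2)
    (h : ℝ) (hh : 0 < h) (n : ℕ) (p : ℝ) (hp : p = h * n) :
    Real.sqrt (h * ∑ j ∈ Idx n,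
        ‖∑' l : {l : ℤ // l ≠ 0}, f (h * (j : ℝ) + p * ((l : ℤ) : ℝ))‖ ^ 2) ≤
      v 1 * Real.sqrt (2 * ∑' m : ℕ, (v (p * (m : ℝ) + p/2) ^ 2)⁻¹) *
        Real.sqrt (1 + h) * Real.sqrt (∑' l : ℤ, locSup f l ^ 2 * v (l : ℝ) ^ 2) := by
  have hv1 : 0 < v 1 := hpos 1
  rcases Nat.eq_zero_or_pos n with hn0 | hn0
  · subst hn0
    have hidx : Idx 0 = ∅ := by decide
    rw [hidx]
    simp only [Finset.sum_empty, mul_zero, Real.sqrt_zero]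
    exact mul_nonneg (mul_nonneg (mul_nonneg hv1.le (Real.sqrt_nonneg _))
      (Real.sqrt_nonneg _)) (Real.sqrt_nonneg _)
  have hp0 : 0 < p := by
    rw [hp]; exact mul_pos hh (by exact_mod_cast hn0)
  set W := ∑' l : ℤ, locSup f l ^ 2 * v (l : ℝ) ^ 2 with hWdef
  have hWnn : 0 ≤ W := tsum_nonneg fun l => mul_nonneg (sq_nonneg _) (sq_nonneg _)
  set Φ := ∑' m : ℕ, (v (p * (m : ℝ) + p/2) ^ 2)⁻¹ with hΦdef
  have hΦnn : 0 ≤ Φ := tsum_nonneg fun m => inv_nonneg.mpr (sq_nonneg _)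
  set q : ℤ → ℝ := fun k => ‖f (h * (k:ℝ))‖ ^ 2 * v (h * (k:ℝ)) ^ 2 with hqdef
  have hqnn : ∀ k, 0 ≤ q k := fun k => mul_nonneg (sq_nonneg _) (sq_nonneg _)
  -- pointwise bound on q
  have hqle : ∀ k : ℤ, q k ≤ v 1 ^ 2 * (locSup f ⌊h * (k:ℝ)⌋ ^ 2 * v ((⌊h * (k:ℝ)⌋ : ℤ) : ℝ) ^ 2) := by
    intro k
    set l : ℤ := ⌊h * (k:ℝ)⌋ with hl
    have hfl : (l : ℝ) ≤ h * k := Int.floor_le _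
    have hfl2 : h * k < (l : ℝ) + 1 := Int.lt_floor_add_one _
    have hfr : h * (k:ℝ) - l ∈ Set.Icc (0:ℝ) 1 := ⟨by linarith, by linarith⟩
    have h1 : ‖f (h * (k:ℝ))‖ ≤ locSup f l := by
      have := abs_le_locSup f hf l hfr
      rwa [sub_add_cancel] at this
    have h2 : v (h * (k:ℝ)) ≤ v l * v 1 := by
      calc v (h * (k:ℝ)) = v ((l:ℝ) + (h * (k:ℝ) - l)) := by ring_nf
        _ ≤ v l * v (h * (k:ℝ) - l) := hsub _ _
        _ ≤ v l * v 1 := by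
            refine mul_le_mul_of_nonneg_left (hmono _ _ ?_) (hpos _).le
            rw [abs_of_nonneg hfr.1, abs_one]; exact hfr.2
    calc q k ≤ locSup f l ^ 2 * (v (l:ℝ) * v 1) ^ 2 :=
          mul_le_mul (pow_le_pow_left₀ (norm_nonneg _) h1 2)
            (pow_le_pow_left₀ (hpos _).le h2 2) (sq_nonneg _) (sq_nonneg _)
      _ = v 1 ^ 2 * (locSup f l ^ 2 * v (l:ℝ) ^ 2) := by ring
  -- counting for q
  obtain ⟨hGsum0, hGle0⟩ := counting (fun l : ℤ => locSup f l ^ 2 * v (l:ℝ) ^ 2)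
    (fun l => mul_nonneg (sq_nonneg _) (sq_nonneg _)) hW h 0 hh
  have hGsum : Summable (fun k : ℤ => locSup f ⌊h * (k:ℝ)⌋ ^ 2 * v ((⌊h * (k:ℝ)⌋ : ℤ) : ℝ) ^ 2) := by
    simpa using hGsum0
  have hGle : ∑' k : ℤ, locSup f ⌊h * (k:ℝ)⌋ ^ 2 * v ((⌊h * (k:ℝ)⌋ : ℤ) : ℝ) ^ 2
      ≤ ((⌊1/h⌋.toNat : ℝ) + 1) * W := by
    simpa using hGle0
  have hqsum : Summable q :=
    Summable.of_nonneg_of_le hqnn hqle (hGsum.mul_left _)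
  have hqW : h * ∑' k, q k ≤ v 1 ^ 2 * (1 + h) * W := by
    have t1 : ∑' k, q k ≤ v 1 ^ 2 * ((⌊1/h⌋.toNat : ℝ) + 1) * W := by
      calc ∑' k, q k ≤ ∑' k : ℤ, v 1 ^ 2 * (locSup f ⌊h * (k:ℝ)⌋ ^ 2 * v ((⌊h * (k:ℝ)⌋ : ℤ) : ℝ) ^ 2) :=
            Summable.tsum_le_tsum hqle hqsum (hGsum.mul_left _)
        _ = v 1 ^ 2 * ∑' k : ℤ, (locSup f ⌊h * (k:ℝ)⌋ ^ 2 * v ((⌊h * (k:ℝ)⌋ : ℤ) : ℝ) ^ 2) :=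
            tsum_mul_left
        _ ≤ v 1 ^ 2 * (((⌊1/h⌋.toNat : ℝ) + 1) * W) :=
            mul_le_mul_of_nonneg_left hGle (sq_nonneg _)
        _ = v 1 ^ 2 * ((⌊1/h⌋.toNat : ℝ) + 1) * W := by ring
    have t3 : h * ((⌊1/h⌋.toNat : ℝ) + 1) ≤ 1 + h := by
      have hfn : (0:ℤ) ≤ ⌊1/h⌋ := Int.floor_nonneg.mpr (by positivity)
      have : ((⌊1/h⌋.toNat : ℤ) : ℝ) ≤ 1/h := by
        rw [Int.toNat_of_nonneg hfn]; exact Int.floor_le _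
      have h4 : (⌊1/h⌋.toNat : ℝ) ≤ 1/h := by exact_mod_cast this
      have h5 : h * (⌊1/h⌋.toNat : ℝ) ≤ 1 := by
        calc h * (⌊1/h⌋.toNat : ℝ) ≤ h * (1/h) := mul_le_mul_of_nonneg_left h4 hh.le
          _ = 1 := by field_simp
      nlinarith
    have hqtsnn : 0 ≤ ∑' k, q k := tsum_nonneg hqnn
    calc h * ∑' k, q k ≤ h * (v 1 ^ 2 * ((⌊1/h⌋.toNat : ℝ) + 1) * W) :=
          mul_le_mul_of_nonneg_left t1 hh.le
      _ = (h * ((⌊1/h⌋.toNat : ℝ) + 1)) * (v 1 ^ 2 * W) := by ring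
      _ ≤ (1 + h) * (v 1 ^ 2 * W) :=
          mul_le_mul_of_nonneg_right t3 (mul_nonneg (sq_nonneg _) hWnn)
      _ = v 1 ^ 2 * (1 + h) * W := by ring
  -- summability of the Φ series
  have hΦsum : Summable (fun m : ℕ => (v (p * (m : ℝ) + p/2) ^ 2)⁻¹) := by
    obtain ⟨hZ, _⟩ := counting (fun l : ℤ => (v (l:ℝ) ^ 2)⁻¹)
      (fun l => inv_nonneg.mpr (sq_nonneg _)) hvsum p (p/2) hp0
    have hZn : Summable (fun m : ℕ => (v ((⌊p * (m:ℝ) + p/2⌋ : ℤ) : ℝ) ^ 2)⁻¹) := by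
      have := hZ.comp_injective (fun a b hab => by exact_mod_cast hab :
        Function.Injective ((↑) : ℕ → ℤ))
      refine this.congr fun m => ?_
      simp only [Function.comp_apply]
      norm_cast
    refine Summable.of_nonneg_of_le (fun m => inv_nonneg.mpr (sq_nonneg _)) (fun m => ?_) hZn
    have hx0 : (0:ℝ) ≤ p * m + p/2 := by positivity
    have hfl : ((⌊p * (m:ℝ) + p/2⌋ : ℤ) : ℝ) ≤ p * m + p/2 := Int.floor_le _
    have hfl0 : (0:ℝ) ≤ ((⌊p * (m:ℝ) + p/2⌋ : ℤ) : ℝ) := by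
      exact_mod_cast Int.floor_nonneg.mpr hx0
    have hvv : v ((⌊p * (m:ℝ) + p/2⌋ : ℤ) : ℝ) ≤ v (p * m + p/2) := by
      refine hmono _ _ ?_
      rw [abs_of_nonneg hfl0, abs_of_nonneg hx0]; exact hfl
    exact inv_anti₀ (pow_pos (hpos _) 2) (pow_le_pow_left₀ (hpos _).le hvv 2)
  -- the per-j bound
  set Q : ℤ → ℝ := fun j => ∑' l : {l : ℤ // l ≠ 0}, q (j + n * l.1) with hQdef
  have hQnn : ∀ j, 0 ≤ Q j := fun j => tsum_nonneg fun l => hqnn _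
  have hperj : ∀ j ∈ Idx n,
      ‖∑' l : {l : ℤ // l ≠ 0}, f (h * (j : ℝ) + p * ((l : ℤ) : ℝ))‖ ^ 2
        ≤ 2 * Φ * Q j := by
    intro j hjmem
    obtain ⟨-, hj2⟩ := Finset.mem_filter.mp hjmem
    have hjabs : |2 * j| ≤ (n : ℤ) := abs_le.mpr ⟨by omega, by omega⟩
    have hjr : |h * (j:ℝ)| ≤ p / 2 := by
      have h2j : |((2 * j : ℤ) : ℝ)| ≤ ((n : ℤ) : ℝ) := by
        rw [← Int.cast_abs]; exact_mod_cast hjabs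
      push_cast at h2j
      rw [abs_mul] at h2j
      norm_num at h2j
      rw [abs_mul, abs_of_nonneg hh.le, hp]
      nlinarith [abs_nonneg (j:ℝ)]
    set x : {l : ℤ // l ≠ 0} → ℝ := fun l => h * (j:ℝ) + p * ((l.1 : ℤ) : ℝ) with hxdef
    have hxq : ∀ l : {l : ℤ // l ≠ 0}, x l = h * (((j + n * l.1 : ℤ) : ℤ) : ℝ) := by
      intro l; rw [hxdef, hp]; push_cast; ring
    set a : {l : ℤ // l ≠ 0} → ℝ := fun l => ‖f (x l)‖ * v (x l) with hadef
    set b : {l : ℤ // l ≠ 0} → ℝ := fun l => (v (x l))⁻¹ with hbdef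
    have ha0 : ∀ l, 0 ≤ a l := fun l => mul_nonneg (norm_nonneg _) (hpos _).le
    have hb0 : ∀ l, 0 ≤ b l := fun l => inv_nonneg.mpr (hpos _).le
    -- a² summable and equals q ∘ e
    have he : Function.Injective (fun l : {l : ℤ // l ≠ 0} => j + n * l.1) := by
      intro l l' hll
      simp only at hll
      have hn' : (n : ℤ) ≠ 0 := by exact_mod_cast hn0.ne'
      exact Subtype.ext (mul_left_cancel₀ hn' (add_left_cancel hll))
    have ha2eq : ∀ l, a l ^ 2 = q (j + n * l.1) := by
      intro l
      rw [hadef, hqdef]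
      simp only
      rw [← hxq l]
      ring
    have ha2 : Summable fun l => a l ^ 2 := by
      refine Summable.congr (hqsum.comp_injective he) fun l => (ha2eq l).symm
    -- b² summable with tsum ≤ 2Φ
    set g : Bool × ℕ → ℝ := fun x => (v (p * (x.2 : ℝ) + p/2) ^ 2)⁻¹ with hgdef
    have hgnn : ∀ x, 0 ≤ g x := fun x => inv_nonneg.mpr (sq_nonneg _)
    have hgsum : Summable g :=
      (summable_prod_of_nonneg hgnn).mpr ⟨fun _ => hΦsum, Summable.of_finite⟩
    have hgtsum : ∑' x, g x = 2 * Φ := by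
      rw [Summable.tsum_prod' hgsum fun _ => hΦsum, tsum_bool]
      simp only [hgdef]
      rw [hΦdef]; ring
    set φ : {l : ℤ // l ≠ 0} → Bool × ℕ := fun l => (decide (0 < l.1), l.1.natAbs - 1) with hφdef
    have hφinj : Function.Injective φ := by
      intro l l' hll
      have h1 : decide (0 < l.1) = decide (0 < l'.1) := congrArg Prod.fst hll
      have h2 : l.1.natAbs - 1 = l'.1.natAbs - 1 := congrArg Prod.snd hll
      rw [decide_eq_decide] at h1
      have h4 := l.2
      have h5 := l'.2
      refine Subtype.ext ?_
      omega
    have hpt : ∀ l, b l ^ 2 ≤ g (φ l) := by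
      intro l
      have hL1 : 1 ≤ l.1.natAbs := by
        have := l.2; omega
      have hLr : ((l.1.natAbs - 1 : ℕ) : ℝ) = |((l.1 : ℤ) : ℝ)| - 1 := by
        rw [Nat.cast_sub hL1, Nat.cast_natAbs]
        norm_num
      have habs : p * ((l.1.natAbs - 1 : ℕ) : ℝ) + p/2 = p * |((l.1:ℤ):ℝ)| - p/2 := by
        rw [hLr]; ring
      have hlabs : (1:ℝ) ≤ |((l.1:ℤ):ℝ)| := by
        have : (1:ℤ) ≤ |l.1| := Int.one_le_abs l.2
        calc (1:ℝ) ≤ ((|l.1| : ℤ) : ℝ) := by exact_mod_cast this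
          _ = |((l.1:ℤ):ℝ)| := by push_cast; simp
      have hx1 : p * |((l.1:ℤ):ℝ)| - p/2 ≤ |x l| := by
        simp only [hxdef]
        have hkey : |p * ((l.1:ℤ):ℝ)| - |h * (j:ℝ)| ≤ |h * (j:ℝ) + p * ((l.1:ℤ):ℝ)| := by
          simpa [abs_neg, sub_neg_eq_add, add_comm] using
            abs_sub_abs_le_abs_sub (p * ((l.1:ℤ):ℝ)) (-(h * (j:ℝ)))
        rw [abs_mul, abs_of_nonneg hp0.le] at hkey
        linarith
      have hx2 : (0:ℝ) ≤ p * |((l.1:ℤ):ℝ)| - p/2 := by nlinarith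
      have hvv : v (p * ((l.1.natAbs - 1 : ℕ) : ℝ) + p/2) ≤ v (x l) := by
        refine hmono _ _ ?_
        rw [habs, abs_of_nonneg hx2]
        exact hx1
      have : (v (x l) ^ 2)⁻¹ ≤ (v (p * ((l.1.natAbs - 1 : ℕ) : ℝ) + p/2) ^ 2)⁻¹ :=
        inv_anti₀ (pow_pos (hpos _) 2) (pow_le_pow_left₀ (hpos _).le hvv 2)
      calc b l ^ 2 = (v (x l) ^ 2)⁻¹ := by rw [hbdef]; simp [inv_pow]
        _ ≤ _ := this
    have hb2 : Summable fun l => b l ^ 2 :=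
      Summable.of_nonneg_of_le (fun l => sq_nonneg _) hpt (hgsum.comp_injective hφinj)
    have hBle : ∑' l, b l ^ 2 ≤ 2 * Φ := by
      calc ∑' l, b l ^ 2 ≤ ∑' x, g x :=
            Summable.tsum_le_tsum_of_inj φ hφinj (fun x _ => hgnn x) hpt hb2 hgsum
        _ = 2 * Φ := hgtsum
    obtain ⟨hab, hCS⟩ := cs_tsum a b ha0 hb0 ha2 hb2
    have habs_eq : ∀ l, a l * b l = ‖f (x l)‖ := by
      intro l
      simp only [hadef, hbdef]
      rw [mul_assoc, mul_inv_cancel₀ (hpos _).ne', mul_one]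
    have hnormsum : Summable fun l => ‖f (x l)‖ :=
      hab.congr habs_eq
    have hS : ‖∑' l : {l : ℤ // l ≠ 0}, f (x l)‖ ≤ ∑' l, ‖f (x l)‖ := by
      have := norm_tsum_le_tsum_norm (f := fun l : {l : ℤ // l ≠ 0} => f (x l))
        (by simpa using hnormsum)
      simpa using this
    have hQa : ∑' l, a l ^ 2 = Q j := by
      rw [hQdef]
      exact tsum_congr ha2eq
    have hfinal : ‖∑' l : {l : ℤ // l ≠ 0}, f (x l)‖ ^ 2 ≤ 2 * Φ * Q j := by
      calc ‖∑' l : {l : ℤ // l ≠ 0}, f (x l)‖ ^ 2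
          ≤ (∑' l, ‖f (x l)‖) ^ 2 :=
            pow_le_pow_left₀ (norm_nonneg _) hS 2
        _ = (∑' l, a l * b l) ^ 2 := by rw [tsum_congr fun l => (habs_eq l).symm]
        _ ≤ (∑' l, a l ^ 2) * (∑' l, b l ^ 2) := hCS
        _ ≤ Q j * (2 * Φ) := by
            rw [hQa]
            exact mul_le_mul_of_nonneg_left hBle (hQnn j)
        _ = 2 * Φ * Q j := by ring
    exact hfinal
  -- reindexing: ∑_{j ∈ Idx n} Q j ≤ ∑' q
  have hD : ∑ j ∈ Idx n, Q j ≤ ∑' k : ℤ, q k := by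
    set E : (↥(Idx n)) × {l : ℤ // l ≠ 0} → ℤ := fun jl => jl.1.1 + n * jl.2.1 with hEdef
    have hE : Function.Injective E := by
      rintro ⟨⟨j, hj⟩, ⟨l, hl⟩⟩ ⟨⟨j', hj'⟩, ⟨l', hl'⟩⟩ hEq
      simp only [hEdef] at hEq
      obtain ⟨-, hjb⟩ := Finset.mem_filter.mp hj
      obtain ⟨-, hjb'⟩ := Finset.mem_filter.mp hj'
      have hd : j - j' = (n:ℤ) * (l' - l) := by linear_combination hEq
      have hlt : |j - j'| < (n:ℤ) := abs_lt.mpr ⟨by omega, by omega⟩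
      have hle : l' - l = 0 := by
        by_contra hne
        have h1 : (1:ℤ) ≤ |l' - l| := Int.one_le_abs hne
        have hnn : (0:ℤ) < (n:ℤ) := by exact_mod_cast hn0
        have h2 : (n:ℤ) ≤ |j - j'| := by
          rw [hd, abs_mul, abs_of_nonneg hnn.le]
          nlinarith
        linarith
      have hj0 : j = j' := by
        rw [hle, mul_zero] at hd; omega
      have hl0 : l = l' := by omega
      simp only [Prod.mk.injEq]
      exact ⟨Subtype.ext hj0, Subtype.ext hl0⟩
    have hEsum : Summable (fun jl => q (E jl)) := hqsum.comp_injective hE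
    have hinner : ∀ j : ↥(Idx n), Summable fun l : {l : ℤ // l ≠ 0} => q (E (j, l)) := by
      intro j
      have hn' : (n : ℤ) ≠ 0 := by exact_mod_cast hn0.ne'
      have he2 : Function.Injective (fun l : {l : ℤ // l ≠ 0} => (j:ℤ) + n * l.1) := by
        intro l l' hll
        simp only at hll
        exact Subtype.ext (mul_left_cancel₀ hn' (add_left_cancel hll))
      exact hqsum.comp_injective he2
    have step1 : ∑ j ∈ Idx n, Q j = ∑' jl : (↥(Idx n)) × {l : ℤ // l ≠ 0}, q (E jl) := by
      rw [← Finset.tsum_subtype (Idx n) Q]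
      rw [Summable.tsum_prod' hEsum hinner]
    rw [step1]
    exact Summable.tsum_le_tsum_of_inj E hE (fun c _ => hqnn c) (fun jl => le_rfl) hEsum hqsum
  -- final assembly
  have main : h * ∑ j ∈ Idx n,
      ‖∑' l : {l : ℤ // l ≠ 0}, f (h * (j : ℝ) + p * ((l : ℤ) : ℝ))‖ ^ 2
      ≤ v 1 ^ 2 * (2 * Φ) * (1 + h) * W := by
    have s1 : ∑ j ∈ Idx n,
        ‖∑' l : {l : ℤ // l ≠ 0}, f (h * (j : ℝ) + p * ((l : ℤ) : ℝ))‖ ^ 2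
        ≤ ∑ j ∈ Idx n, 2 * Φ * Q j := Finset.sum_le_sum hperj
    have s2 : ∑ j ∈ Idx n, 2 * Φ * Q j = 2 * Φ * ∑ j ∈ Idx n, Q j := by
      rw [Finset.mul_sum]
    calc h * ∑ j ∈ Idx n,
        ‖∑' l : {l : ℤ // l ≠ 0}, f (h * (j : ℝ) + p * ((l : ℤ) : ℝ))‖ ^ 2
        ≤ h * (2 * Φ * ∑ j ∈ Idx n, Q j) :=
          mul_le_mul_of_nonneg_left (s1.trans_eq s2) hh.le
      _ = 2 * Φ * (h * ∑ j ∈ Idx n, Q j) := by ring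
      _ ≤ 2 * Φ * (h * ∑' k : ℤ, q k) := by
          refine mul_le_mul_of_nonneg_left (mul_le_mul_of_nonneg_left hD hh.le) (by linarith)
      _ ≤ 2 * Φ * (v 1 ^ 2 * (1 + h) * W) :=
          mul_le_mul_of_nonneg_left hqW (by linarith)
      _ = v 1 ^ 2 * (2 * Φ) * (1 + h) * W := by ring
  calc Real.sqrt (h * ∑ j ∈ Idx n,
      ‖∑' l : {l : ℤ // l ≠ 0}, f (h * (j : ℝ) + p * ((l : ℤ) : ℝ))‖ ^ 2)
      ≤ Real.sqrt (v 1 ^ 2 * (2 * Φ) * (1 + h) * W) := Real.sqrt_le_sqrt main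
    _ = v 1 * Real.sqrt (2 * Φ) * Real.sqrt (1 + h) * Real.sqrt W := by
        rw [Real.sqrt_mul (mul_nonneg (mul_nonneg (sq_nonneg _) (by linarith)) (by linarith) :
            (0:ℝ) ≤ v 1 ^ 2 * (2 * Φ) * (1 + h)) W,
          Real.sqrt_mul (mul_nonneg (sq_nonneg _) (by linarith) :
            (0:ℝ) ≤ v 1 ^ 2 * (2 * Φ)) (1 + h),
          Real.sqrt_mul (sq_nonneg _) (2 * Φ), Real.sqrt_sq hv1.le]
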